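/- With Q_t defined by dQ_t/dP = 1/q_t^G on G_t = F_t ∨ σ(G) (so that F_t and σ(G) are Q_t-independent and Q_t = P on F_t), every (P, F)-martingale on {0,...,t} is a (Q_t, G)-martingale on {0,...,t}, where G_s = F_s ∨ σ(G). Conversely, every F-adapted process on {0,...,t} that is a (Q_t, G)-martingale is a (P, F)-martingale, so the two sets of martingales (restricted to F-adapted processes) coincide. -/

import Mathlib

open MeasureTheory Set
open scoped ENNReal NNReal

/-- On a finite space with a finite measure, every a.e. strongly measurable
real function is integrable. -/
private lemma fin_integrable {Ω : Type*} [Fintype Ω] {mΩ : MeasurableSpace Ω}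
    {μ : Measure Ω} [IsFiniteMeasure μ] {f : Ω → ℝ}
    (hf : AEStronglyMeasurable f μ) : Integrable f μ := by
  refine ⟨hf, ?_⟩
  have hb : ∀ ω, (‖f ω‖₊ : ℝ≥0∞) ≤ ∑ ω' : Ω, (‖f ω'‖₊ : ℝ≥0∞) := fun ω =>
    Finset.single_le_sum (f := fun ω' => (‖f ω'‖₊ : ℝ≥0∞))
      (fun _ _ => zero_le) (Finset.mem_univ ω)
  calc (∫⁻ a, ‖f a‖₊ ∂μ) ≤ ∫⁻ _, ∑ ω' : Ω, (‖f ω'‖₊ : ℝ≥0∞) ∂μ := lintegral_mono hb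
    _ = (∑ ω' : Ω, (‖f ω'‖₊ : ℝ≥0∞)) * μ univ := lintegral_const _
    _ < ⊤ := ENNReal.mul_lt_top
        (ENNReal.sum_lt_top.mpr fun _ _ => ENNReal.coe_lt_top) (measure_lt_top μ univ)

/-- Martingale preservation: with `Q_t = (1/q_t^G) · P` on `𝒢 t = ℱ t ⊔ σ(G)`,
an `ℱ`-adapted process on `{0,...,t}` is a `(P, ℱ)`-martingale iff it is a
`(Q_t, 𝒢)`-martingale. -/
theorem stmt3 {Ω : Type*} [Fintype Ω] {mΩ : MeasurableSpace Ω}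
    (μ : Measure Ω) [IsProbabilityMeasure μ]
    (t : ℕ) (ℱ 𝒢 : Filtration ℕ mΩ)
    {Γ : Type*} [Fintype Γ] [MeasurableSpace Γ] [MeasurableSingletonClass Γ]
    (G : Ω → Γ) (hG : Measurable G)
    (h𝒢 : ∀ s, (𝒢 s : MeasurableSpace Ω) =
      (ℱ s : MeasurableSpace Ω) ⊔ MeasurableSpace.comap G inferInstance)
    (hposG : ∀ c : Γ, 0 < (μ (G ⁻¹' {c})).toReal)
    (hpos : ∀ c : Γ, ∀ s ≤ t, ∀ᵐ ω ∂μ,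
      0 < (μ[(G ⁻¹' {c}).indicator (fun _ => (1 : ℝ)) | ℱ s]) ω)
    (qG : ℕ → Ω → ℝ)
    (hqG : ∀ s ω, qG s ω =
      (μ[(G ⁻¹' {G ω}).indicator (fun _ => (1 : ℝ)) | ℱ s]) ω / (μ (G ⁻¹' {G ω})).toReal)
    (Q : Measure Ω)
    (hQ : Q = μ.withDensity (fun ω => ENNReal.ofReal (qG t ω)⁻¹))
    (X : ℕ → Ω → ℝ)
    (hadapted : ∀ s ≤ t, StronglyMeasurable[ℱ s] (X s)) :
    (∀ s r, s ≤ r → r ≤ t → μ[X r | ℱ s] =ᵐ[μ] X s) ↔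
    (∀ s r, s ≤ r → r ≤ t → Q[X r | 𝒢 s] =ᵐ[Q] X s) := by
  classical
  -- notation for the conditional probabilities at time `t`
  set p : Γ → Ω → ℝ :=
    fun c => μ[(G ⁻¹' {c}).indicator (fun _ => (1 : ℝ)) | ℱ t] with hp
  have hp_sm : ∀ c, StronglyMeasurable[ℱ t] (p c) := fun _ => stronglyMeasurable_condExp
  have hp_pos : ∀ᵐ ω ∂μ, ∀ c, 0 < p c ω := (ae_all_iff).mpr fun c => hpos c t le_rfl
  have hGc : ∀ c : Γ, MeasurableSet (G ⁻¹' {c}) := fun c => hG (measurableSet_singleton c)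
  have hqinv : ∀ ω, (qG t ω)⁻¹ = (μ (G ⁻¹' {G ω})).toReal / p (G ω) ω := fun ω => by
    rw [hqG t ω, inv_div, hp]
  -- measurability of the density
  have hinv_meas : Measurable fun ω => (qG t ω)⁻¹ := by
    have hrepr : (fun ω => (qG t ω)⁻¹) =
        fun ω => ∑ c : Γ, (G ⁻¹' {c}).indicator
          (fun ω' => (μ (G ⁻¹' {c})).toReal / p c ω') ω := by
      funext ω
      rw [hqinv ω, Finset.sum_eq_single (G ω)]
      · rw [Set.indicator_of_mem (show ω ∈ G ⁻¹' {G ω} from rfl)]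
      · intro c _ hc
        exact Set.indicator_of_notMem
          (fun h => hc ((Set.mem_preimage.mp h : G ω ∈ ({c} : Set Γ)) :
            G ω = c).symm) _
      · intro h; exact absurd (Finset.mem_univ _) h
    rw [hrepr]
    exact Finset.measurable_sum _ fun c _ =>
      (Measurable.indicator
        (measurable_const.div (((hp_sm c).mono (ℱ.le t)).measurable)) (hGc c))
  set dR : Ω → ℝ≥0 := fun ω => ((qG t ω)⁻¹).toNNReal with hdR
  have hdR_meas : Measurable dR := hinv_meas.real_toNNReal
  have hQd : Q = μ.withDensity fun ω => ((dR ω : ℝ≥0) : ℝ≥0∞) := by rw [hQ]; rfl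
  haveI hQfin : IsFiniteMeasure Q := by
    constructor
    rw [hQd, withDensity_apply _ MeasurableSet.univ, setLIntegral_univ]
    calc (∫⁻ ω, ((dR ω : ℝ≥0) : ℝ≥0∞) ∂μ)
        ≤ ∫⁻ _, ∑ ω' : Ω, ((dR ω' : ℝ≥0) : ℝ≥0∞) ∂μ :=
          lintegral_mono fun ω =>
            Finset.single_le_sum (f := fun ω' => ((dR ω' : ℝ≥0) : ℝ≥0∞))
              (fun _ _ => zero_le) (Finset.mem_univ ω)
      _ = (∑ ω' : Ω, ((dR ω' : ℝ≥0) : ℝ≥0∞)) * μ univ := lintegral_const _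
      _ < ⊤ := ENNReal.mul_lt_top
          (ENNReal.sum_lt_top.mpr fun _ _ => ENNReal.coe_lt_top) (measure_lt_top μ univ)
  -- integrability of everything in sight
  have hintμ : ∀ {f : Ω → ℝ}, StronglyMeasurable f → Integrable f μ := fun hf =>
    fin_integrable hf.aestronglyMeasurable
  have hintQ : ∀ {f : Ω → ℝ}, StronglyMeasurable f → Integrable f Q := fun hf =>
    fin_integrable hf.aestronglyMeasurable
  -- the key integral identity
  have key : ∀ r, r ≤ t → ∀ (f : Ω → ℝ), StronglyMeasurable[ℱ r] f →
      ∀ B : Set Ω, MeasurableSet[ℱ r] B → ∀ c : Γ,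
      ∫ ω in B ∩ G ⁻¹' {c}, f ω ∂Q = (μ (G ⁻¹' {c})).toReal * ∫ ω in B, f ω ∂μ := by
    intro r hr f hf B hB c
    have hfm : StronglyMeasurable f := hf.mono (ℱ.le r)
    have hBm : MeasurableSet B := ℱ.le r B hB
    have hA : MeasurableSet (B ∩ G ⁻¹' {c}) := hBm.inter (hGc c)
    set u : Ω → ℝ := fun ω => B.indicator f ω / p c ω with hu
    set g : Ω → ℝ := (G ⁻¹' {c}).indicator (fun _ => (1 : ℝ)) with hg
    have hu_sm : StronglyMeasurable[ℱ t] u :=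
      (((hf.indicator hB).mono (ℱ.mono hr)).measurable.div
        (hp_sm c).measurable).stronglyMeasurable
    have hu_m : StronglyMeasurable u := hu_sm.mono (ℱ.le t)
    have hg_m : StronglyMeasurable g := stronglyMeasurable_const.indicator (hGc c)
    have hug : Integrable (u * g) μ := hintμ (hu_m.mul hg_m)
    have hgint : Integrable g μ := hintμ hg_m
    calc ∫ ω in B ∩ G ⁻¹' {c}, f ω ∂Q
        = ∫ ω in B ∩ G ⁻¹' {c}, dR ω • f ω ∂μ := by
          rw [hQd, setIntegral_withDensity_eq_setIntegral_smul hdR_meas _ hA]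
      _ = ∫ ω, (B ∩ G ⁻¹' {c}).indicator (fun ω => dR ω • f ω) ω ∂μ :=
          (integral_indicator hA).symm
      _ = ∫ ω, (μ (G ⁻¹' {c})).toReal * (u ω * g ω) ∂μ := by
          refine integral_congr_ae ?_
          filter_upwards [hp_pos] with ω hω
          by_cases hωc : ω ∈ G ⁻¹' {c}
          · have hGωc : G ω = c := hωc
            by_cases hωB : ω ∈ B
            · rw [Set.indicator_of_mem (Set.mem_inter hωB hωc)]
              have hpos' : 0 < (qG t ω)⁻¹ := by
                rw [hqinv ω, hGωc]
                exact div_pos (hposG c) (hω c)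
              have hcoe : (dR ω : ℝ) = (qG t ω)⁻¹ := Real.coe_toNNReal _ hpos'.le
              rw [NNReal.smul_def, hcoe, hqinv ω, hGωc, hu, hg]
              simp only [Set.indicator_of_mem hωB, Set.indicator_of_mem hωc,
                smul_eq_mul]
              ring
            · rw [Set.indicator_of_notMem (fun h => hωB h.1)]
              simp [hu, Set.indicator_of_notMem hωB]
          · rw [Set.indicator_of_notMem (fun h => hωc h.2)]
            simp [hg, Set.indicator_of_notMem hωc]
      _ = (μ (G ⁻¹' {c})).toReal * ∫ ω, u ω * g ω ∂μ := integral_const_mul _ _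
      _ = (μ (G ⁻¹' {c})).toReal * ∫ ω, u ω * p c ω ∂μ := by
          congr 1
          have h1 : μ[u * g | ℱ t] =ᵐ[μ] u * μ[g | ℱ t] :=
            condExp_mul_of_stronglyMeasurable_left hu_sm hug hgint
          calc ∫ ω, u ω * g ω ∂μ = ∫ ω, (u * g) ω ∂μ := rfl
            _ = ∫ ω, (μ[u * g | ℱ t]) ω ∂μ := (integral_condExp (ℱ.le t)).symm
            _ = ∫ ω, (u * μ[g | ℱ t]) ω ∂μ := integral_congr_ae h1
            _ = ∫ ω, u ω * p c ω ∂μ := rfl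
      _ = (μ (G ⁻¹' {c})).toReal * ∫ ω, B.indicator f ω ∂μ := by
          congr 1
          refine integral_congr_ae ?_
          filter_upwards [hp_pos] with ω hω
          exact div_mul_cancel₀ _ (hω c).ne'
      _ = (μ (G ⁻¹' {c})).toReal * ∫ ω in B, f ω ∂μ := by rw [integral_indicator hBm]
  -- the generating π-system of 𝒢 s
  have hgen : ∀ s : ℕ, (𝒢 s : MeasurableSpace Ω) = MeasurableSpace.generateFrom
      {A : Set Ω | ∃ B : Set Ω, ∃ C : Set Γ, MeasurableSet[ℱ s] B ∧ A = B ∩ G ⁻¹' C} := by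
    intro s
    rw [h𝒢 s]
    apply le_antisymm
    · refine sup_le ?_ ?_
      · intro A hA
        exact MeasurableSpace.measurableSet_generateFrom
          ⟨A, Set.univ, hA, by simp⟩
      · intro A hA
        obtain ⟨C, _, rfl⟩ := hA
        exact MeasurableSpace.measurableSet_generateFrom
          ⟨Set.univ, C, MeasurableSet.univ, by simp⟩
    · refine MeasurableSpace.generateFrom_le ?_
      rintro A ⟨B, C, hB, rfl⟩
      exact ((le_sup_left : (ℱ s : MeasurableSpace Ω) ≤ _) B hB).inter
        ((le_sup_right : MeasurableSpace.comap G inferInstance ≤ _) _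
          ⟨C, C.toFinite.measurableSet, rfl⟩)
  have hpi : ∀ s : ℕ, IsPiSystem
      {A : Set Ω | ∃ B : Set Ω, ∃ C : Set Γ, MeasurableSet[ℱ s] B ∧ A = B ∩ G ⁻¹' C} := by
    rintro s A1 ⟨B1, C1, hB1, rfl⟩ A2 ⟨B2, C2, hB2, rfl⟩ _
    refine ⟨B1 ∩ B2, C1 ∩ C2, hB1.inter hB2, ?_⟩
    ext ω
    simp only [Set.mem_inter_iff, Set.mem_preimage]
    tauto
  -- nonemptiness
  have hΩne : Nonempty Ω := by
    by_contra h
    rw [not_nonempty_iff] at h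
    have h1 : μ Set.univ = 1 := measure_univ
    rw [Set.univ_eq_empty_iff.mpr h, measure_empty] at h1
    exact zero_ne_one h1
  constructor
  · -- forward direction
    intro hmart s r hsr hrt
    have hst : s ≤ t := hsr.trans hrt
    have hXr : StronglyMeasurable[ℱ r] (X r) := hadapted r hrt
    have hXs : StronglyMeasurable[ℱ s] (X s) := hadapted s hst
    have hXr_m : StronglyMeasurable (X r) := hXr.mono (ℱ.le r)
    have hXs_m : StronglyMeasurable (X s) := hXs.mono (ℱ.le s)
    -- basic sets
    have hbasic : ∀ B : Set Ω, MeasurableSet[ℱ s] B → ∀ C : Set Γ,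
        ∫ ω in B ∩ G ⁻¹' C, X s ω ∂Q = ∫ ω in B ∩ G ⁻¹' C, X r ω ∂Q := by
      intro B hB C
      have hdecomp : B ∩ G ⁻¹' C = ⋃ c ∈ C.toFinset, B ∩ G ⁻¹' {c} := by
        ext ω
        simp only [Set.mem_inter_iff, Set.mem_preimage, Set.mem_singleton_iff,
          Set.mem_iUnion, Set.mem_toFinset, exists_prop]
        constructor
        · rintro ⟨h1, h2⟩; exact ⟨G ω, h2, h1, rfl⟩
        · rintro ⟨c, hc, h1, h2⟩; exact ⟨h1, h2 ▸ hc⟩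
      have hmeas : ∀ c ∈ C.toFinset, MeasurableSet (B ∩ G ⁻¹' {c}) := fun c _ =>
        ((ℱ.le s B hB).inter (hGc c))
      have hdisj : Set.Pairwise ↑C.toFinset (Function.onFun Disjoint fun c => B ∩ G ⁻¹' {c}) := by
        intro c _ c' _ hne
        refine Set.disjoint_left.mpr fun ω h h' => hne ?_
        have h1 : G ω = c := h.2
        have h2 : G ω = c' := h'.2
        rw [← h1, h2]
      rw [hdecomp,
        integral_biUnion_finset C.toFinset hmeas hdisj
          (fun c _ => (hintQ hXs_m).integrableOn),
        integral_biUnion_finset C.toFinset hmeas hdisj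
          (fun c _ => (hintQ hXr_m).integrableOn)]
      refine Finset.sum_congr rfl fun c _ => ?_
      rw [key r hrt (X r) hXr B (ℱ.mono hsr _ hB) c,
        key s hst (X s) hXs B hB c]
      congr 1
      have h2 : ∫ ω in B, (μ[X r | ℱ s]) ω ∂μ = ∫ ω in B, X r ω ∂μ :=
        setIntegral_condExp (ℱ.le s) (hintμ hXr_m) hB
      have h3 : ∫ ω in B, (μ[X r | ℱ s]) ω ∂μ = ∫ ω in B, X s ω ∂μ :=
        setIntegral_congr_ae (ℱ.le s B hB)
          ((hmart s r hsr hrt).mono fun ω h _ => h)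
      rw [← h3, h2]
    have htotal : ∫ ω, X s ω ∂Q = ∫ ω, X r ω ∂Q := by
      have := hbasic Set.univ MeasurableSet.univ Set.univ
      simpa using this
    have hg_eq : ∀ A : Set Ω, MeasurableSet[𝒢 s] A → Q A < ⊤ →
        ∫ ω in A, X s ω ∂Q = ∫ ω in A, X r ω ∂Q := by
      intro A hA _
      refine MeasurableSpace.induction_on_inter (m := 𝒢 s)
        (C := fun A _ => ∫ ω in A, X s ω ∂Q = ∫ ω in A, X r ω ∂Q) (hgen s) (hpi s)
        (by simp) ?_ ?_ ?_ A hA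
      · rintro A' ⟨B, C, hB, rfl⟩
        exact hbasic B hB C
      · intro A' hA' hCA'
        have hA'm : MeasurableSet A' := 𝒢.le s A' hA'
        have e1 := integral_add_compl hA'm (hintQ hXs_m)
        have e2 := integral_add_compl hA'm (hintQ hXr_m)
        linarith [htotal]
      · intro f hdisj hmeas hC
        rw [integral_iUnion (fun i => 𝒢.le s _ (hmeas i)) hdisj
            (hintQ hXs_m).integrableOn,
          integral_iUnion (fun i => 𝒢.le s _ (hmeas i)) hdisj
            (hintQ hXr_m).integrableOn]
        exact tsum_congr hC
    have hFle𝒢 : (ℱ s : MeasurableSpace Ω) ≤ 𝒢 s := by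
      rw [h𝒢 s]; exact le_sup_left
    exact (ae_eq_condExp_of_forall_setIntegral_eq (𝒢.le s) (hintQ hXr_m)
      (fun A _ _ => (hintQ hXs_m).integrableOn) hg_eq
      ((hXs.mono hFle𝒢).aestronglyMeasurable)).symm
  · -- converse direction
    intro hQmart s r hsr hrt
    have hst : s ≤ t := hsr.trans hrt
    have hXr : StronglyMeasurable[ℱ r] (X r) := hadapted r hrt
    have hXs : StronglyMeasurable[ℱ s] (X s) := hadapted s hst
    have hXr_m : StronglyMeasurable (X r) := hXr.mono (ℱ.le r)
    have hXs_m : StronglyMeasurable (X s) := hXs.mono (ℱ.le s)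
    obtain ⟨ω0⟩ := hΩne
    set c : Γ := G ω0 with hc0
    refine (ae_eq_condExp_of_forall_setIntegral_eq (ℱ.le s) (hintμ hXr_m)
      (fun B _ _ => (hintμ hXs_m).integrableOn) ?_
      hXs.aestronglyMeasurable).symm
    intro B hB _
    have hA𝒢 : MeasurableSet[𝒢 s] (B ∩ G ⁻¹' {c}) := by
      rw [h𝒢 s]
      exact ((le_sup_left : (ℱ s : MeasurableSpace Ω) ≤ _) B hB).inter
        ((le_sup_right : MeasurableSpace.comap G inferInstance ≤ _) _
          ⟨{c}, measurableSet_singleton c, rfl⟩)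
    have h1 : ∫ ω in B ∩ G ⁻¹' {c}, X r ω ∂Q = ∫ ω in B ∩ G ⁻¹' {c}, X s ω ∂Q := by
      rw [← setIntegral_condExp (𝒢.le s) (hintQ hXr_m) hA𝒢]
      exact setIntegral_congr_ae (𝒢.le s _ hA𝒢)
        ((hQmart s r hsr hrt).mono fun ω h _ => h)
    rw [key r hrt (X r) hXr B (ℱ.mono hsr _ hB) c,
      key s hst (X s) hXs B hB c] at h1
    exact (mul_left_cancel₀ (hposG c).ne' h1).symm
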